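/- For every w ∈ F₂' there exist a₁, b₁, a₂, b₂ ∈ F₂ such that w·([a₁,b₁]·[a₂,b₂])⁻¹ ∈ F₂''. In other words, every element of the derived subgroup of the free metabelian group M₂ = F₂/F₂'' is a product of two commutators. (Bavard–Meigniez.) -/

import Mathlib

open scoped commutatorElement

namespace Stmt10

open Subgroup

variable {H : Type*} [Group H]

lemma mem_comm (a b : H) : ⁅a,b⁆ ∈ commutator H :=
  commutator_mem_commutator (mem_top a) (mem_top b)

lemma conj_mem' {a : H} (ha : a ∈ commutator H) (g : H) : g * a * g⁻¹ ∈ commutator H := by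
  haveI : (commutator H).Normal := inferInstance
  exact this.conj_mem a ha g

section Metab

variable (hK : ∀ u ∈ commutator H, ∀ v ∈ commutator H, u * v = v * u)

include hK

lemma hfix {u k : H} (hu : u ∈ commutator H) (hk : k ∈ commutator H) :
    u * k * u⁻¹ = k := by
  rw [hK u hu k hk]; group

lemma L_mul {g u v : H} (hu : u ∈ commutator H) (hv : v ∈ commutator H) :
    ⁅g, u⁆ * ⁅g, v⁆ = ⁅g, u * v⁆ := by
  have h1 : u⁻¹ * (g * v * g⁻¹) = (g * v * g⁻¹) * u⁻¹ :=
    hK _ (inv_mem hu) _ (conj_mem' hv g)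
  simp only [commutatorElement_def]
  have h2 : u⁻¹ * v⁻¹ = v⁻¹ * u⁻¹ := hK _ (inv_mem hu) _ (inv_mem hv)
  calc g * u * g⁻¹ * u⁻¹ * (g * v * g⁻¹ * v⁻¹)
      = g * u * g⁻¹ * (u⁻¹ * (g * v * g⁻¹)) * v⁻¹ := by group
    _ = g * u * g⁻¹ * ((g * v * g⁻¹) * u⁻¹) * v⁻¹ := by rw [h1]
    _ = g * (u * v) * g⁻¹ * (u⁻¹ * v⁻¹) := by group
    _ = g * (u * v) * g⁻¹ * (v⁻¹ * u⁻¹) := by rw [h2]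
    _ = g * (u * v) * g⁻¹ * (u * v)⁻¹ := by group

lemma L_inv {g u : H} (hu : u ∈ commutator H) : ⁅g, u⁆⁻¹ = ⁅g, u⁻¹⁆ := by
  have h := L_mul hK (g := g) hu (inv_mem hu)
  rw [mul_inv_cancel] at h
  have h2 : ⁅g, (1:H)⁆ = 1 := by simp
  rw [h2] at h
  exact inv_eq_of_mul_eq_one_right h

lemma absorb {g u k : H} (hu : u ∈ commutator H) (hk : k ∈ commutator H) :
    ⁅g * u, k⁆ = ⁅g, k⁆ := by
  simp only [commutatorElement_def]
  calc g * u * k * (g * u)⁻¹ * k⁻¹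
      = g * (u * k * u⁻¹) * g⁻¹ * k⁻¹ := by group
    _ = g * k * g⁻¹ * k⁻¹ := by rw [hfix hK hu hk]

lemma GS (g : H) (m : ℤ) {w : H} (hw : w ∈ commutator H) :
    ∃ v ∈ commutator H, ⁅g ^ m, w⁆ = ⁅g, v⁆ := by
  induction m using Int.induction_on with
  | zero =>
    refine ⟨1, one_mem _, ?_⟩
    simp
  | succ n ih =>
    obtain ⟨v, hv, hve⟩ := ih
    refine ⟨(g * v * g⁻¹) * w, mul_mem (conj_mem' hv g) hw, ?_⟩
    have h1 : g ^ ((n : ℤ) + 1) = g * g ^ (n : ℤ) := by group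
    have h2 : ⁅g * g ^ (n:ℤ), w⁆ = g * ⁅g ^ (n:ℤ), w⁆ * g⁻¹ * ⁅g, w⁆ := by
      simp only [commutatorElement_def]; group
    have h3 : g * ⁅g, v⁆ * g⁻¹ = ⁅g, g * v * g⁻¹⁆ := by
      simp only [commutatorElement_def]; group
    rw [h1, h2, hve, h3, L_mul hK (conj_mem' hv g) hw]
  | pred n ih =>
    obtain ⟨v, hv, hve⟩ := ih
    refine ⟨(g⁻¹ * v * g) * (g⁻¹ * w⁻¹ * g),
      mul_mem (by simpa using conj_mem' hv g⁻¹) (by simpa using conj_mem' (inv_mem hw) g⁻¹), ?_⟩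
    have h1 : g ^ (-(n : ℤ) - 1) = g⁻¹ * g ^ (-(n : ℤ)) := by group
    have h2 : ⁅g⁻¹ * g ^ (-(n:ℤ)), w⁆ = g⁻¹ * ⁅g ^ (-(n:ℤ)), w⁆ * g * ⁅g⁻¹, w⁆ := by
      simp only [commutatorElement_def]; group
    have h3 : g⁻¹ * ⁅g, v⁆ * g = ⁅g, g⁻¹ * v * g⁆ := by
      simp only [commutatorElement_def]; group
    have h4 : ⁅g⁻¹, w⁆ = ⁅g, g⁻¹ * w⁻¹ * g⁆ := by
      have : ⁅g⁻¹, w⁆ = ⁅g, g⁻¹ * w * g⁆⁻¹ := by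
        simp only [commutatorElement_def]; group
      rw [this, L_inv hK (by simpa using conj_mem' hw g⁻¹)]
      congr 1; group
    rw [h1, h2, hve, h3, h4,
      L_mul hK (by simpa using conj_mem' hv g⁻¹) (by simpa using conj_mem' (inv_mem hw) g⁻¹)]

lemma swap {Y v : H} (hv : v ∈ commutator H) : ⁅Y, v⁆ = ⁅v⁻¹, Y⁆ := by
  have h1 : v⁻¹ * (Y * v * Y⁻¹) = (Y * v * Y⁻¹) * v⁻¹ :=
    hK _ (inv_mem hv) _ (conj_mem' hv Y)
  simp only [commutatorElement_def]
  calc Y * v * Y⁻¹ * v⁻¹ = (Y * v * Y⁻¹) * v⁻¹ := by group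
    _ = v⁻¹ * (Y * v * Y⁻¹) := h1.symm
    _ = v⁻¹ * Y * v⁻¹⁻¹ * Y⁻¹ := by group


lemma merge (X Y : H) (e₁ e₂ : ℤ) {u₁ u₂ : H}
    (h₁ : u₁ ∈ commutator H) (h₂ : u₂ ∈ commutator H) :
    ∃ v ∈ commutator H,
      ⁅X ^ e₁ * u₁, Y⁆ * ⁅X ^ e₂ * u₂, Y⁆ =
        ⁅X ^ (e₁ + e₂) * ((X ^ (-e₂) * u₁ * X ^ e₂) * u₂), Y⁆ * ⁅X, v⁆ := by
  set A := X ^ e₁ * u₁ with hA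
  set B := X ^ e₂ * u₂ with hB
  have hkB : ⁅B, Y⁆ ∈ commutator H := mem_comm B Y
  have hkA : ⁅A, Y⁆ ∈ commutator H := mem_comm A Y
  -- ⁅A*B, Y⁆ = A * ⁅B,Y⁆ * A⁻¹ * ⁅A,Y⁆
  have id1 : ⁅A * B, Y⁆ = A * ⁅B, Y⁆ * A⁻¹ * ⁅A, Y⁆ := by
    simp only [commutatorElement_def]; group
  -- A * k * A⁻¹ = ⁅A, k⁆ * k
  have id2 : A * ⁅B, Y⁆ * A⁻¹ = ⁅A, ⁅B, Y⁆⁆ * ⁅B, Y⁆ := by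
    simp only [commutatorElement_def]; group
  have id3 : ⁅A, ⁅B, Y⁆⁆ = ⁅X ^ e₁, ⁅B, Y⁆⁆ := absorb hK h₁ hkB
  obtain ⟨v₀, hv₀, hv₀e⟩ := GS hK X e₁ hkB
  have id4 : ⁅A * B, Y⁆ = ⁅X, v₀⁆ * (⁅A, Y⁆ * ⁅B, Y⁆) := by
    rw [id1, id2, id3, hv₀e, mul_assoc, hK _ hkB _ hkA]
  have hAB : A * B = X ^ (e₁ + e₂) * ((X ^ (-e₂) * u₁ * X ^ e₂) * u₂) := by
    rw [hA, hB]; group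
  refine ⟨v₀⁻¹, inv_mem hv₀, ?_⟩
  rw [← hAB, ← L_inv hK hv₀]
  have hcomm : ⁅A * B, Y⁆ * ⁅X, v₀⁆⁻¹ = ⁅X, v₀⁆⁻¹ * ⁅A * B, Y⁆ :=
    hK _ (mem_comm _ _) _ (inv_mem (mem_comm _ _))
  rw [hcomm, id4, ← mul_assoc, inv_mul_cancel, one_mul]

/-- The key structure theorem in the metabelian quotient. -/
lemma main_metab (X Y : H)
    (hdec : ∀ g : H, ∃ (m n : ℤ) (s : H), s ∈ commutator H ∧ g = X ^ m * Y ^ n * s)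
    {w : H} (hw : w ∈ Subgroup.normalClosure {⁅X, Y⁆}) :
    ∃ (e : ℤ) (u v : H), u ∈ commutator H ∧ v ∈ commutator H ∧
      w = ⁅X ^ e * u, Y⁆ * ⁅X, v⁆ := by
  rw [Subgroup.normalClosure] at hw
  induction hw using Subgroup.closure_induction with
  | one =>
    exact ⟨0, 1, 1, one_mem _, one_mem _, by simp⟩
  | mem z hz =>
    rw [Group.mem_conjugatesOfSet_iff] at hz
    obtain ⟨a, ha, hconj⟩ := hz
    rw [Set.mem_singleton_iff] at ha
    subst ha
    rw [isConj_iff] at hconj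
    obtain ⟨g, hg⟩ := hconj
    obtain ⟨m, n, s, hs, rfl⟩ := hdec g
    set c := ⁅X, Y⁆ with hc
    have hcK : c ∈ commutator H := mem_comm X Y
    have hz1 : z = X ^ m * (Y ^ n * c * Y ^ (-n)) * X ^ (-m) := by
      rw [← hg]
      have : s * c * s⁻¹ = c := hfix hK hs hcK
      calc X ^ m * Y ^ n * s * c * (X ^ m * Y ^ n * s)⁻¹
          = X ^ m * Y ^ n * (s * c * s⁻¹) * Y ^ (-n) * X ^ (-m) := by group
        _ = X ^ m * Y ^ n * c * Y ^ (-n) * X ^ (-m) := by rw [this]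
        _ = X ^ m * (Y ^ n * c * Y ^ (-n)) * X ^ (-m) := by group
    set k₁ := Y ^ n * c * Y ^ (-n) with hk₁
    have hk₁K : k₁ ∈ commutator H := by
      have := conj_mem' hcK (Y ^ n)
      simpa [hk₁, zpow_neg] using this
    have hz2 : z = ⁅X ^ m, k₁⁆ * k₁ := by
      rw [hz1]; simp only [commutatorElement_def]; group
    obtain ⟨v₁, hv₁, hv₁e⟩ := GS hK X m hk₁K
    have hk₁2 : k₁ = ⁅Y ^ n, c⁆ * c := by
      rw [hk₁]; simp only [commutatorElement_def]; group
    obtain ⟨v₂, hv₂, hv₂e⟩ := GS hK Y n hcK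
    have hswap : ⁅Y, v₂⁆ = ⁅X ^ (0:ℤ) * v₂⁻¹, Y⁆ := by
      rw [swap hK hv₂]; norm_num
    have hcform : c = ⁅X ^ (1:ℤ) * 1, Y⁆ := by norm_num; exact hc
    obtain ⟨v₃, hv₃, hv₃e⟩ := merge hK X Y 0 1 (inv_mem hv₂) (one_mem _)
    -- z = ⁅X,v₁⁆ * ⁅X^0 * v₂⁻¹, Y⁆ * ⁅X^1*1, Y⁆
    have hz3 : z = ⁅X, v₁⁆ * (⁅X ^ (0:ℤ) * v₂⁻¹, Y⁆ * ⁅X ^ (1:ℤ) * 1, Y⁆) := by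
      rw [hz2, hv₁e, hk₁2, hv₂e, hswap, hcform]
    rw [hv₃e] at hz3
    set u₃ := X ^ (-(1:ℤ)) * v₂⁻¹ * X ^ (1:ℤ) * 1 with hu₃
    have hu₃K : u₃ ∈ commutator H := by
      rw [hu₃, mul_one]
      simpa [zpow_neg] using conj_mem' (inv_mem hv₂) (X ^ (-(1:ℤ)))
    refine ⟨(0:ℤ) + 1, u₃, v₃ * v₁, hu₃K, mul_mem hv₃ hv₁, ?_⟩
    have hBK : ⁅X ^ ((0:ℤ)+1) * u₃, Y⁆ ∈ commutator H := mem_comm _ _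
    have hXv₃ : ⁅X, v₃⁆ ∈ commutator H := mem_comm _ _
    calc z = ⁅X, v₁⁆ * (⁅X ^ ((0:ℤ)+1) * u₃, Y⁆ * ⁅X, v₃⁆) := by
          rw [hz3, hu₃]
      _ = (⁅X, v₁⁆ * ⁅X ^ ((0:ℤ)+1) * u₃, Y⁆) * ⁅X, v₃⁆ := by group
      _ = (⁅X ^ ((0:ℤ)+1) * u₃, Y⁆ * ⁅X, v₁⁆) * ⁅X, v₃⁆ := by
          rw [hK _ (mem_comm _ _) _ hBK]
      _ = ⁅X ^ ((0:ℤ)+1) * u₃, Y⁆ * (⁅X, v₁⁆ * ⁅X, v₃⁆) := by group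
      _ = ⁅X ^ ((0:ℤ)+1) * u₃, Y⁆ * ⁅X, v₁ * v₃⁆ := by rw [L_mul hK hv₁ hv₃]
      _ = ⁅X ^ ((0:ℤ)+1) * u₃, Y⁆ * ⁅X, v₃ * v₁⁆ := by
          rw [hK _ hv₁ _ hv₃]
  | mul a b ha hb iha ihb =>
    obtain ⟨e₁, u₁, v₁, hu₁, hv₁, rfl⟩ := iha
    obtain ⟨e₂, u₂, v₂, hu₂, hv₂, rfl⟩ := ihb
    obtain ⟨v, hv, hve⟩ := merge hK X Y e₁ e₂ hu₁ hu₂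
    refine ⟨e₁ + e₂, (X ^ (-e₂) * u₁ * X ^ e₂) * u₂, v * (v₁ * v₂),
      mul_mem (by simpa [zpow_neg] using conj_mem' hu₁ (X ^ (-e₂))) hu₂,
      mul_mem hv (mul_mem hv₁ hv₂), ?_⟩
    have c1 : ⁅X, v₁⁆ * ⁅X ^ e₂ * u₂, Y⁆ = ⁅X ^ e₂ * u₂, Y⁆ * ⁅X, v₁⁆ :=
      hK _ (mem_comm _ _) _ (mem_comm _ _)
    calc ⁅X ^ e₁ * u₁, Y⁆ * ⁅X, v₁⁆ * (⁅X ^ e₂ * u₂, Y⁆ * ⁅X, v₂⁆)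
        = ⁅X ^ e₁ * u₁, Y⁆ * (⁅X, v₁⁆ * ⁅X ^ e₂ * u₂, Y⁆) * ⁅X, v₂⁆ := by group
      _ = ⁅X ^ e₁ * u₁, Y⁆ * (⁅X ^ e₂ * u₂, Y⁆ * ⁅X, v₁⁆) * ⁅X, v₂⁆ := by rw [c1]
      _ = (⁅X ^ e₁ * u₁, Y⁆ * ⁅X ^ e₂ * u₂, Y⁆) * (⁅X, v₁⁆ * ⁅X, v₂⁆) := by group
      _ = (⁅X ^ (e₁+e₂) * ((X ^ (-e₂) * u₁ * X ^ e₂) * u₂), Y⁆ * ⁅X, v⁆) *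
            ⁅X, v₁ * v₂⁆ := by rw [hve, L_mul hK hv₁ hv₂]
      _ = ⁅X ^ (e₁+e₂) * ((X ^ (-e₂) * u₁ * X ^ e₂) * u₂), Y⁆ *
            (⁅X, v⁆ * ⁅X, v₁ * v₂⁆) := by group
      _ = _ := by rw [L_mul hK hv (mul_mem hv₁ hv₂)]
  | inv a ha iha =>
    obtain ⟨e, u, v, hu, hv, rfl⟩ := iha
    set u₂ := X ^ e * u⁻¹ * X ^ (-e) with hu₂def
    have hu₂ : u₂ ∈ commutator H := by
      simpa [hu₂def, zpow_neg] using conj_mem' (inv_mem hu) (X ^ e)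
    obtain ⟨v', hv', hve⟩ := merge hK X Y e (-e) hu hu₂
    have hu1 : (X ^ (-(-e)) * u * X ^ (-e)) * u₂ = 1 := by
      rw [hu₂def]; group
    have hXe : X ^ (e + -e) * (1:H) = 1 := by group
    rw [hu1, hXe] at hve
    have h1 : ⁅(1:H), Y⁆ = 1 := by simp
    rw [h1, one_mul] at hve
    -- hve : ⁅X^e*u, Y⁆ * ⁅X^(-e)*u₂, Y⁆ = ⁅X, v'⁆
    have hinv : ⁅X ^ e * u, Y⁆⁻¹ = ⁅X ^ (-e) * u₂, Y⁆ * ⁅X, v'⁆⁻¹ := by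
      rw [← hve]; group
    refine ⟨-e, u₂, v'⁻¹ * v⁻¹, hu₂, mul_mem (inv_mem hv') (inv_mem hv), ?_⟩
    have c1 : ⁅X, v⁆⁻¹ * ⁅X ^ (-e) * u₂, Y⁆ = ⁅X ^ (-e) * u₂, Y⁆ * ⁅X, v⁆⁻¹ :=
      hK _ (inv_mem (mem_comm _ _)) _ (mem_comm _ _)
    calc (⁅X ^ e * u, Y⁆ * ⁅X, v⁆)⁻¹
        = ⁅X, v⁆⁻¹ * ⁅X ^ e * u, Y⁆⁻¹ := by group
      _ = ⁅X, v⁆⁻¹ * (⁅X ^ (-e) * u₂, Y⁆ * ⁅X, v'⁆⁻¹) := by rw [hinv]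
      _ = (⁅X, v⁆⁻¹ * ⁅X ^ (-e) * u₂, Y⁆) * ⁅X, v'⁆⁻¹ := by group
      _ = (⁅X ^ (-e) * u₂, Y⁆ * ⁅X, v⁆⁻¹) * ⁅X, v'⁆⁻¹ := by rw [c1]
      _ = ⁅X ^ (-e) * u₂, Y⁆ * (⁅X, v⁆⁻¹ * ⁅X, v'⁆⁻¹) := by group
      _ = ⁅X ^ (-e) * u₂, Y⁆ * (⁅X, v⁻¹⁆ * ⁅X, v'⁻¹⁆) := by
          rw [L_inv hK hv, L_inv hK hv']
      _ = ⁅X ^ (-e) * u₂, Y⁆ * ⁅X, v⁻¹ * v'⁻¹⁆ := by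
          rw [L_mul hK (inv_mem hv) (inv_mem hv')]
      _ = ⁅X ^ (-e) * u₂, Y⁆ * ⁅X, v'⁻¹ * v⁻¹⁆ := by
          rw [hK _ (inv_mem hv) _ (inv_mem hv')]

end Metab

namespace C

abbrev G := FreeGroup (Fin 2)

noncomputable def xx : G := FreeGroup.of 0
noncomputable def yy : G := FreeGroup.of 1

/-- exponent-sum homomorphism to ℤ × ℤ -/
noncomputable def φ : G →* Multiplicative (ℤ × ℤ) :=
  FreeGroup.lift (fun i => Multiplicative.ofAdd (if i = 0 then ((1:ℤ), (0:ℤ)) else (0, 1)))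

/-- map from ℤ × ℤ into the abelianization -/
noncomputable def ψ : Multiplicative (ℤ × ℤ) →* Abelianization G where
  toFun p := Abelianization.of xx ^ (p.toAdd.1) * Abelianization.of yy ^ (p.toAdd.2)
  map_one' := by simp
  map_mul' p q := by
    simp only [toAdd_mul, Prod.fst_add, Prod.snd_add, zpow_add]
    rw [mul_mul_mul_comm]

lemma psi_comp_phi : ψ.comp φ = Abelianization.of := by
  apply FreeGroup.ext_hom
  intro i
  fin_cases i <;>
    simp [φ, ψ, FreeGroup.lift_apply_of, xx, yy]

lemma mem_commutator_of_phi_eq_one {a : G} (h : φ a = 1) : a ∈ commutator G := by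
  have h2 : Abelianization.of a = 1 := by
    rw [← psi_comp_phi]
    simp [MonoidHom.comp_apply, h]
  exact (QuotientGroup.eq_one_iff a).mp h2

lemma phi_x : φ xx = Multiplicative.ofAdd ((1:ℤ), (0:ℤ)) := by
  simp [φ, xx, FreeGroup.lift_apply_of]

lemma phi_y : φ yy = Multiplicative.ofAdd ((0:ℤ), (1:ℤ)) := by
  simp [φ, yy, FreeGroup.lift_apply_of]

/-- Decomposition of an arbitrary element of the free group. -/
lemma decompose (a : G) : ∃ (m n : ℤ), (xx ^ m * yy ^ n)⁻¹ * a ∈ commutator G := by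
  refine ⟨(Multiplicative.toAdd (φ a)).1, (Multiplicative.toAdd (φ a)).2, ?_⟩
  apply mem_commutator_of_phi_eq_one
  have hx : φ (xx ^ (Multiplicative.toAdd (φ a)).1) =
      Multiplicative.ofAdd (((Multiplicative.toAdd (φ a)).1, (0:ℤ))) := by
    rw [map_zpow, phi_x]
    apply Multiplicative.toAdd.injective
    simp [Prod.smul_def]
  have hy : φ (yy ^ (Multiplicative.toAdd (φ a)).2) =
      Multiplicative.ofAdd ((0:ℤ), (Multiplicative.toAdd (φ a)).2) := by
    rw [map_zpow, phi_y]
    apply Multiplicative.toAdd.injective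
    simp [Prod.smul_def]
  rw [map_mul, map_inv, map_mul, hx, hy]
  apply Multiplicative.toAdd.injective
  simp [Prod.ext_iff]


instance : (derivedSeries G 2).Normal := derivedSeries_normal G 2

abbrev Q := G ⧸ derivedSeries G 2

noncomputable def π : G →* Q := QuotientGroup.mk' (derivedSeries G 2)

lemma π_surj : Function.Surjective π := QuotientGroup.mk'_surjective _

lemma map_commutator_G : (commutator G).map π = commutator Q := by
  rw [commutator_def, commutator_def, Subgroup.map_commutator,
    Subgroup.map_top_of_surjective _ π_surj]

lemma π_mem_commutator {a : G} (ha : a ∈ commutator G) : π a ∈ commutator Q := by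
  rw [← map_commutator_G]; exact Subgroup.mem_map_of_mem π ha

lemma hK : ∀ u ∈ commutator Q, ∀ v ∈ commutator Q, u * v = v * u := by
  intro u hu v hv
  rw [← map_commutator_G] at hu hv
  obtain ⟨a, ha, rfl⟩ := hu
  obtain ⟨b, hb, rfl⟩ := hv
  have hds : ⁅a, b⁆ ∈ derivedSeries G 2 := by
    rw [derivedSeries_succ]
    exact commutator_mem_commutator (by rwa [derivedSeries_one]) (by rwa [derivedSeries_one])
  have h1 : π ⁅a, b⁆ = 1 := (QuotientGroup.eq_one_iff _).mpr hds
  rw [map_commutatorElement] at h1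
  exact (commutatorElement_eq_one_iff_mul_comm.mp h1)


-- generation: commutator Q is the normal closure of ⁅π xx, π yy⁆
lemma ncl_eq : commutator Q = Subgroup.normalClosure {⁅π xx, π yy⁆} := by
  apply le_antisymm
  · rw [commutator_def]
    rw [Subgroup.commutator_le]
    intro g _ h _
    set N := Subgroup.normalClosure ({⁅π xx, π yy⁆} : Set Q)
    set ρ : Q →* Q ⧸ N := QuotientGroup.mk' N
    have key : Commute (ρ (π xx)) (ρ (π yy)) := by
      have h1 : ρ ⁅π xx, π yy⁆ = 1 :=
        (QuotientGroup.eq_one_iff _).mpr (Subgroup.subset_normalClosure rfl)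
      rw [map_commutatorElement] at h1
      exact commutatorElement_eq_one_iff_commute.mp h1
    have main : ∀ a b : G, Commute (ρ (π a)) (ρ (π b)) := by
      intro a
      induction a using FreeGroup.induction_on with
      | C1 => intro b; simp only [map_one]; exact Commute.one_left _
      | of i =>
        intro b
        induction b using FreeGroup.induction_on with
        | C1 => simp only [map_one]; exact Commute.one_right _
        | of j =>
          fin_cases i <;> fin_cases j
          · exact Commute.refl _
          · exact key
          · exact key.symm
          · exact Commute.refl _
        | inv_of j hj => simp only [map_inv]; exact hj.inv_right
        | mul b₁ b₂ h₁ h₂ => simp only [map_mul]; exact h₁.mul_right h₂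
      | inv_of i hi => intro b; simp only [map_inv]; exact (hi b).inv_left
      | mul a₁ a₂ h₁ h₂ => intro b; simp only [map_mul]; exact (h₁ b).mul_left (h₂ b)
    obtain ⟨a, rfl⟩ := π_surj g
    obtain ⟨b, rfl⟩ := π_surj h
    have : ⁅π a, π b⁆ ∈ N := by
      rw [← QuotientGroup.eq_one_iff (N := N), ← QuotientGroup.mk'_apply,
        map_commutatorElement]
      exact commutatorElement_eq_one_iff_commute.mpr (main a b)
    exact this
  · apply Subgroup.normalClosure_le_normal
    intro z hz
    rw [Set.mem_singleton_iff] at hz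
    subst hz
    exact commutator_mem_commutator (Subgroup.mem_top _) (Subgroup.mem_top _)

lemma hdec : ∀ g : Q, ∃ (m n : ℤ) (s : Q), s ∈ commutator Q ∧
    g = (π xx) ^ m * (π yy) ^ n * s := by
  intro g
  obtain ⟨a, rfl⟩ := π_surj g
  obtain ⟨m, n, h⟩ := decompose a
  refine ⟨m, n, π ((xx ^ m * yy ^ n)⁻¹ * a), π_mem_commutator h, ?_⟩
  rw [← map_zpow, ← map_zpow, ← map_mul, ← map_mul]
  congr 1
  group

end C

end Stmt10

theorem stmt_10 (w : FreeGroup (Fin 2)) (hw : w ∈ commutator (FreeGroup (Fin 2))) :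
    ∃ a₁ b₁ a₂ b₂ : FreeGroup (Fin 2),
      w * (⁅a₁, b₁⁆ * ⁅a₂, b₂⁆)⁻¹ ∈ derivedSeries (FreeGroup (Fin 2)) 2 := by
  classical
  open Stmt10 Stmt10.C in
  have hπw : π w ∈ Subgroup.normalClosure {⁅π xx, π yy⁆} := by
    rw [← ncl_eq]
    exact π_mem_commutator hw
  obtain ⟨e, u, v, hu, hv, heq⟩ := Stmt10.main_metab Stmt10.C.hK (Stmt10.C.π Stmt10.C.xx)
    (Stmt10.C.π Stmt10.C.yy) Stmt10.C.hdec hπw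
  obtain ⟨a, rfl⟩ := Stmt10.C.π_surj u
  obtain ⟨b, rfl⟩ := Stmt10.C.π_surj v
  refine ⟨Stmt10.C.xx ^ e * a, Stmt10.C.yy, Stmt10.C.xx, b, ?_⟩
  have h1 : Stmt10.C.π (w * (⁅Stmt10.C.xx ^ e * a, Stmt10.C.yy⁆ * ⁅Stmt10.C.xx, b⁆)⁻¹) = 1 := by
    rw [map_mul, map_inv, map_mul, map_commutatorElement, map_commutatorElement,
      map_mul, map_zpow, heq]
    group
  exact (QuotientGroup.eq_one_iff _).mp h1
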